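/- Fix integers k, m ≥ 2 and let D_{k,m} be the m-branching diamond graph of depth k with source s and sink t, uniform edge probability measure ν(e) = 1/(km), and edge lengths d(e) = 1/k. Define φ : V(D_{k,m}) → ℝ by φ([(u,i)]) = 1 if i is odd, i < m, and u ∉ {0,1}; φ([(u,i)]) = −1 if i is even and u ∉ {0,1}; and φ = 0 otherwise. Then: (1) φ(s) = φ(t) = 0; (2) φ(e⁻)·φ(e⁺) ≥ 0 for every edge e (edge-sign property); (3) ‖φ‖_∞ = 1; (4) ‖φ‖_{L¹(μ)} = 2(k−1)⌊m/2⌋/(km) ≥ 1/3, where μ is the vertex measure μ(x) = ∑_{e⁺=x} ν(e)/2 + ∑_{e⁻=x} ν(e)/2; and (5) for each edge ε of the path P_k, ∑_{e : π(e) = ε} φ(e⁻) ν(e) = 0 and ∑_{e : π(e) = ε} φ(e⁺) ν(e) = 0, where π : V(D_{k,m}) → V(P_k) is the collapsing map π([(u,i)]) = u. -/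

import Mathlib

/-- Vertices of the `m`-branching diamond graph of depth `k`: the source `Sum.inl false`,
the sink `Sum.inl true`, and interior vertices `(position, branch)` with position in
`{1, …, k−1}` (encoded by `Fin (k−1)`) and branch `i ∈ {1, …, m}` (encoded by `j = i − 1` in
`Fin m`). -/
abbrev DiamondVert (k m : ℕ) := Bool ⊕ (Fin (k - 1) × Fin m)

/-- Tail of the edge at position `e.1 ∈ {0, …, k−1}` on branch `e.2` of `D_{k,m}`. -/
def diamondSrc (k m : ℕ) (e : Fin k × Fin m) : DiamondVert k m :=
  if h : e.1.val = 0 then Sum.inl false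
  else Sum.inr (⟨e.1.val - 1, by have := e.1.isLt; omega⟩, e.2)

/-- Head of the edge at position `e.1 ∈ {0, …, k−1}` on branch `e.2` of `D_{k,m}`. -/
def diamondTgt (k m : ℕ) (e : Fin k × Fin m) : DiamondVert k m :=
  if h : e.1.val = k - 1 then Sum.inl true
  else Sum.inr (⟨e.1.val, by have := e.1.isLt; omega⟩, e.2)

/-- The degree-probability vertex measure of `D_{k,m}` induced by the uniform edge measure
`ν(e) = 1/(km)`. -/
noncomputable def diamondμ (k m : ℕ) (x : DiamondVert k m) : ℝ :=
  (∑ _e ∈ Finset.univ.filter (fun e => diamondTgt k m e = x), (1 / (k * m : ℝ)) / 2)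
  + ∑ _e ∈ Finset.univ.filter (fun e => diamondSrc k m e = x), (1 / (k * m : ℝ)) / 2

/-- The base function `φ` of `D_{k,m}`: with branches `i = j + 1 ∈ {1, …, m}`, it is `1` on
interior vertices of odd branches `i < m`, `−1` on interior vertices of even branches,
and `0` otherwise (in particular on the source and the sink). -/
noncomputable def diamondφ (k m : ℕ) : DiamondVert k m → ℝ
  | Sum.inl _ => 0
  | Sum.inr (_, j) =>
      if j.val % 2 = 0 ∧ j.val + 1 < m then 1 else if j.val % 2 = 1 then -1 else 0

/-- The base function of the diamond graph `D_{k,m}`: it vanishes at the source and the sink,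
has the edge-sign property, has sup norm `1`, has `L¹(μ)`-norm `2(k−1)⌊m/2⌋/(km) ≥ 1/3`, and
its induced edge functions `φ₋, φ₊` average to `0` over the edges lying above each fixed edge
of the path `P_k` (kernel of the conditional expectation onto the collapsing map). -/
lemma sum_sign (n : ℕ) :
    ∑ j ∈ Finset.range n, (if j % 2 = 0 then (1:ℝ) else -1) = ((n % 2 : ℕ) : ℝ) := by
  induction n with
  | zero => simp
  | succ n ih =>
    rw [Finset.sum_range_succ, ih]
    by_cases h1 : n % 2 = 0
    · have h2 : (n+1) % 2 = 1 := by omega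
      simp [h1, h2]
    · have h1' : n % 2 = 1 := by omega
      have h2 : (n+1) % 2 = 0 := by omega
      simp [h1, h1', h2]

lemma sum_corr (m : ℕ) (hm : 1 ≤ m) :
    ∑ j ∈ Finset.range m, (if j = m - 1 ∧ m % 2 = 1 then (1:ℝ) else 0)
      = ((m % 2 : ℕ) : ℝ) := by
  by_cases h : m % 2 = 1
  · simp only [h, and_true]
    rw [Finset.sum_ite_eq' (Finset.range m) (m-1) (fun _ => (1:ℝ))]
    simp [Finset.mem_range]
    omega
  · have h0 : m % 2 = 0 := by omega
    simp [h, h0]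

lemma sum_f (m : ℕ) (hm : 2 ≤ m) :
    ∑ j : Fin m, (if j.val % 2 = 0 ∧ j.val + 1 < m then (1:ℝ)
      else if j.val % 2 = 1 then -1 else 0) = 0 := by
  rw [Fin.sum_univ_eq_sum_range
    (fun j => if j % 2 = 0 ∧ j + 1 < m then (1:ℝ) else if j % 2 = 1 then -1 else 0) m]
  have key : ∀ j ∈ Finset.range m,
      (if j % 2 = 0 ∧ j + 1 < m then (1:ℝ) else if j % 2 = 1 then -1 else 0)
      = (if j % 2 = 0 then (1:ℝ) else -1) - (if j = m - 1 ∧ m % 2 = 1 then 1 else 0) := by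
    intro j hj
    rw [Finset.mem_range] at hj
    split_ifs with h1 h2 h3 h4 h5 h6 <;> first | omega | norm_num
  rw [Finset.sum_congr rfl key, Finset.sum_sub_distrib, sum_sign, sum_corr m (by omega)]
  ring

lemma sum_absf (m : ℕ) (hm : 2 ≤ m) :
    ∑ j : Fin m, |if j.val % 2 = 0 ∧ j.val + 1 < m then (1:ℝ)
      else if j.val % 2 = 1 then -1 else 0| = 2 * ((m / 2 : ℕ) : ℝ) := by
  rw [Fin.sum_univ_eq_sum_range
    (fun j => |if j % 2 = 0 ∧ j + 1 < m then (1:ℝ) else if j % 2 = 1 then -1 else 0|) m]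
  have key : ∀ j ∈ Finset.range m,
      |if j % 2 = 0 ∧ j + 1 < m then (1:ℝ) else if j % 2 = 1 then -1 else 0|
      = 1 - (if j = m - 1 ∧ m % 2 = 1 then 1 else 0) := by
    intro j hj
    rw [Finset.mem_range] at hj
    split_ifs with h1 h2 h3 h4 <;> first | omega | norm_num
  rw [Finset.sum_congr rfl key, Finset.sum_sub_distrib, Finset.sum_const, sum_corr m (by omega)]
  simp only [Finset.card_range, nsmul_eq_mul, mul_one]
  have h : (2 * (m / 2) + m % 2 : ℕ) = m := by omega
  have := congrArg (Nat.cast : ℕ → ℝ) h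
  push_cast at this ⊢
  linarith

lemma mu_inr (k m : ℕ) (hk : 2 ≤ k) (p : Fin (k-1)) (j : Fin m) :
    diamondμ k m (Sum.inr (p, j)) = 1 / (k * m : ℝ) := by
  have hp := p.isLt
  have hT : Finset.univ.filter (fun e => diamondTgt k m e = Sum.inr (p, j))
      = {((⟨p.val, by omega⟩ : Fin k), j)} := by
    ext ⟨a, b⟩
    simp only [Finset.mem_filter, Finset.mem_univ, true_and, Finset.mem_singleton,
      Prod.mk.injEq]
    simp only [diamondTgt]
    constructor
    · intro h
      split_ifs at h with h1
      rw [Sum.inr.injEq, Prod.mk.injEq] at h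
      obtain ⟨h2, h3⟩ := h
      have h4 := congrArg Fin.val h2
      simp only at h4
      exact ⟨Fin.ext (by simp [h4]), h3⟩
    · rintro ⟨rfl, rfl⟩
      rw [dif_neg (by simp; omega)]
  have hS : Finset.univ.filter (fun e => diamondSrc k m e = Sum.inr (p, j))
      = {((⟨p.val + 1, by omega⟩ : Fin k), j)} := by
    ext ⟨a, b⟩
    simp only [Finset.mem_filter, Finset.mem_univ, true_and, Finset.mem_singleton,
      Prod.mk.injEq]
    simp only [diamondSrc]
    constructor
    · intro h
      split_ifs at h with h1
      rw [Sum.inr.injEq, Prod.mk.injEq] at h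
      obtain ⟨h2, h3⟩ := h
      have h4 := congrArg Fin.val h2
      simp only at h4
      exact ⟨Fin.ext (by simp; omega), h3⟩
    · rintro ⟨rfl, rfl⟩
      rw [dif_neg (by simp)]
      simp
  rw [diamondμ, hT, hS]
  rw [Finset.sum_singleton, Finset.sum_singleton]
  ring

theorem diamond_base_function (k m : ℕ) (hk : 2 ≤ k) (hm : 2 ≤ m) :
    (diamondφ k m (Sum.inl false) = 0 ∧ diamondφ k m (Sum.inl true) = 0) ∧
    (∀ e : Fin k × Fin m, 0 ≤ diamondφ k m (diamondSrc k m e) * diamondφ k m (diamondTgt k m e)) ∧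
    ((∀ x, |diamondφ k m x| ≤ 1) ∧ ∃ x, |diamondφ k m x| = 1) ∧
    ((∑ x, diamondμ k m x * |diamondφ k m x|)
        = 2 * ((k : ℝ) - 1) * ((m / 2 : ℕ) : ℝ) / ((k : ℝ) * m) ∧
      (1 : ℝ) / 3 ≤ 2 * ((k : ℝ) - 1) * ((m / 2 : ℕ) : ℝ) / ((k : ℝ) * m)) ∧
    (∀ i : Fin k,
      (∑ j : Fin m, diamondφ k m (diamondSrc k m (i, j)) * (1 / ((k : ℝ) * m)) = 0) ∧
      (∑ j : Fin m, diamondφ k m (diamondTgt k m (i, j)) * (1 / ((k : ℝ) * m)) = 0)) := by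
  refine ⟨⟨rfl, rfl⟩, ?_, ⟨?_, ?_⟩, ⟨?_, ?_⟩, ?_⟩
  · -- edge-sign property
    rintro ⟨a, b⟩
    rw [diamondSrc, diamondTgt]
    split_ifs <;> simp only [diamondφ] <;>
      first
        | exact mul_self_nonneg _
        | simp
  · -- sup norm ≤ 1
    rintro (c | ⟨p, j⟩)
    · simp [diamondφ]
    · simp only [diamondφ]
      split_ifs <;> norm_num
  · -- sup norm attained
    refine ⟨Sum.inr (⟨0, by omega⟩, ⟨0, by omega⟩), ?_⟩
    have h0 : (0:ℕ) % 2 = 0 ∧ 0 + 1 < m := ⟨rfl, by omega⟩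
    simp [diamondφ, h0]
  · -- L¹ norm value
    rw [Fintype.sum_sum_type]
    have hbool : ∑ b : Bool, diamondμ k m (Sum.inl b) * |diamondφ k m (Sum.inl b)| = 0 := by
      simp [diamondφ]
    rw [hbool, zero_add]
    have hterm : ∀ x : Fin (k-1) × Fin m,
        diamondμ k m (Sum.inr x) * |diamondφ k m (Sum.inr x)|
        = (1 / (k * m : ℝ)) *
          |if x.2.val % 2 = 0 ∧ x.2.val + 1 < m then (1:ℝ)
            else if x.2.val % 2 = 1 then -1 else 0| := by
      rintro ⟨p, j⟩
      rw [mu_inr k m hk p j]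
      rfl
    rw [Finset.sum_congr rfl (fun x _ => hterm x), Fintype.sum_prod_type]
    have hcol : ∀ p : Fin (k-1),
        (∑ j : Fin m, (1 / (k * m : ℝ)) *
          |if j.val % 2 = 0 ∧ j.val + 1 < m then (1:ℝ)
            else if j.val % 2 = 1 then -1 else 0|)
        = (1 / (k * m : ℝ)) * (2 * ((m / 2 : ℕ) : ℝ)) := by
      intro p
      rw [← Finset.mul_sum, sum_absf m hm]
    rw [Finset.sum_congr rfl (fun p _ => hcol p), Finset.sum_const, Finset.card_univ,
      Fintype.card_fin, nsmul_eq_mul]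
    have hcast : ((k - 1 : ℕ) : ℝ) = (k : ℝ) - 1 := by
      push_cast [Nat.cast_sub (by omega : 1 ≤ k)]
      ring
    rw [hcast]
    have hk0 : (k : ℝ) ≠ 0 := by positivity
    have hm0 : (m : ℝ) ≠ 0 := by
      have : (0:ℝ) < m := by exact_mod_cast (by omega : 0 < m)
      linarith
    field_simp
  · -- L¹ norm lower bound
    have hkm : (0:ℝ) < (k : ℝ) * m := by
      have h1 : (0:ℝ) < k := by exact_mod_cast (by omega : 0 < k)
      have h2 : (0:ℝ) < m := by exact_mod_cast (by omega : 0 < m)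
      positivity
    rw [div_le_div_iff₀ (by norm_num) hkm]
    have hnat : k * m ≤ 6 * ((k - 1) * (m / 2)) := by
      have ham : m ≤ 3 * (m / 2) := by omega
      have hk2 : k ≤ 2 * (k - 1) := by omega
      calc k * m ≤ (2 * (k - 1)) * (3 * (m / 2)) := Nat.mul_le_mul hk2 ham
        _ = 6 * ((k - 1) * (m / 2)) := by ring
    have hcR : ((k * m : ℕ) : ℝ) ≤ ((6 * ((k - 1) * (m / 2)) : ℕ) : ℝ) := by
      exact_mod_cast hnat
    push_cast [Nat.cast_sub (by omega : 1 ≤ k)] at hcR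
    linarith
  · -- conditional expectation kernel
    intro i
    constructor
    · by_cases h : i.val = 0
      · have : ∀ j : Fin m, diamondSrc k m (i, j) = Sum.inl false := fun j => dif_pos h
        simp [this, diamondφ]
      · have hφ : ∀ j : Fin m, diamondφ k m (diamondSrc k m (i, j))
            = (if j.val % 2 = 0 ∧ j.val + 1 < m then (1:ℝ)
                else if j.val % 2 = 1 then -1 else 0) := by
          intro j
          rw [diamondSrc, dif_neg h]
          rfl
        rw [Finset.sum_congr rfl (fun j _ => by rw [hφ j]), ← Finset.sum_mul,
          sum_f m hm, zero_mul]
    · by_cases h : i.val = k - 1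
      · have : ∀ j : Fin m, diamondTgt k m (i, j) = Sum.inl true := fun j => dif_pos h
        simp [this, diamondφ]
      · have hφ : ∀ j : Fin m, diamondφ k m (diamondTgt k m (i, j))
            = (if j.val % 2 = 0 ∧ j.val + 1 < m then (1:ℝ)
                else if j.val % 2 = 1 then -1 else 0) := by
          intro j
          rw [diamondTgt, dif_neg h]
          rfl
        rw [Finset.sum_congr rfl (fun j _ => by rw [hφ j]), ← Finset.sum_mul,
          sum_f m hm, zero_mul]
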